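/- arXiv:2207.05952 — 2 statements merged into one kernel-verified Lean document; each statement's English description precedes it below -/
import Mathlib

section
/- Under dropout applied to the last hidden layer, the expectation over the dropout noise of the mean squared error equals the noise-free mean squared error plus the regularizer R₁(θ) = ((1-p)/(2np)) ∑_{i=1}^n ∑_{j=1}^{m} (W_j f_j(x_i))², where W_j f_j(x_i) is the contribution of hidden neuron j to the output on sample x_i. -/
open MeasureTheory ProbabilityTheory

lemma two_point_aux {Ω : Type*} [MeasurableSpace Ω] (μ : Measure Ω) [IsProbabilityMeasure μ]
    (p a c : ℝ) (hp : 0 ≤ p) (hp1 : p ≤ 1) (hac : a ≠ c)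
    (X : Ω → ℝ) (hX : Measurable X)
    (hA : μ {ω | X ω = a} = ENNReal.ofReal p)
    (hB : μ {ω | X ω = c} = ENNReal.ofReal (1 - p))
    (g : ℝ → ℝ) :
    Integrable (fun ω => g (X ω)) μ ∧ ∫ ω, g (X ω) ∂μ = p * g a + (1 - p) * g c := by
  set A : Set Ω := {ω | X ω = a} with hAdef
  set B : Set Ω := {ω | X ω = c} with hBdef
  have mA : MeasurableSet A := hX (measurableSet_singleton a)
  have mB : MeasurableSet B := hX (measurableSet_singleton c)
  have hdisj : Disjoint A B := by
    rw [Set.disjoint_left]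
    rintro ω h1 h2
    exact hac ((h1 : X ω = a).symm.trans (h2 : X ω = c))
  have hU : μ (A ∪ B) = 1 := by
    rw [measure_union hdisj mB, hA, hB, ← ENNReal.ofReal_add hp (by linarith)]
    norm_num
  have hcompl : μ (A ∪ B)ᶜ = 0 := by
    have h := measure_compl (mA.union mB) (measure_ne_top μ _)
    rw [hU] at h
    simpa using h
  have h_ae : ∀ᵐ ω ∂μ, ω ∈ A ∪ B := mem_ae_iff.mpr hcompl
  have h_eq : (fun ω => g (X ω)) =ᵐ[μ]
      fun ω => A.indicator (fun _ => g a) ω + B.indicator (fun _ => g c) ω := by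
    filter_upwards [h_ae] with ω hω
    rcases hω with hω | hω
    · have hXa : X ω = a := hω
      have hnB : ω ∉ B := fun h => hac (hXa.symm.trans h)
      simp [Set.indicator_of_mem hω, Set.indicator_of_notMem hnB, hXa]
    · have hXc : X ω = c := hω
      have hnA : ω ∉ A := fun h => hac ((h : X ω = a).symm.trans hXc)
      simp [Set.indicator_of_mem hω, Set.indicator_of_notMem hnA, hXc]
  have hint : Integrable
      (fun ω => A.indicator (fun _ => g a) ω + B.indicator (fun _ => g c) ω) μ :=
    ((integrable_const (g a)).indicator mA).add ((integrable_const (g c)).indicator mB)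
  constructor
  · exact hint.congr h_eq.symm
  · rw [integral_congr_ae h_eq, integral_add ((integrable_const (g a)).indicator mA)
      ((integrable_const (g c)).indicator mB)]
    rw [integral_indicator_const _ mA, integral_indicator_const _ mB, measureReal_def, measureReal_def, hA, hB,
      ENNReal.toReal_ofReal hp, ENNReal.toReal_ofReal (by linarith)]
    simp [mul_comm]

/-- With dropout on the last hidden layer, the expectation over the dropout
noise of the MSE equals the noise-free MSE plus
R₁(θ) = ((1-p)/(2np)) ∑_i ∑_j (W_j f_j(x_i))². -/
theorem expectation_dropout_loss
    {Ω : Type*} [MeasurableSpace Ω] (μ : Measure Ω) [IsProbabilityMeasure μ]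
    (n m : ℕ) (p : ℝ) (hp : 0 < p) (hp1 : p ≤ 1)
    (η : Fin m → Ω → ℝ) (hmeas : ∀ j, Measurable (η j))
    (hindep : ProbabilityTheory.iIndepFun η μ)
    (hlaw1 : ∀ j, μ {ω | η j ω = (1 - p) / p} = ENNReal.ofReal p)
    (hlaw2 : ∀ j, μ {ω | η j ω = -1} = ENNReal.ofReal (1 - p))
    (W : Fin m → ℝ)       -- output weights W_j
    (f : Fin m → Fin n → ℝ)  -- hidden activations f_j(x_i)
    (b : ℝ)               -- output bias
    (y : Fin n → ℝ) :
    (∫ ω, (1 / (2 * (n : ℝ))) *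
        ∑ i, (∑ j, (1 + η j ω) * (W j * f j i) + b - y i) ^ 2 ∂μ)
      = (1 / (2 * (n : ℝ))) * ∑ i, (∑ j, W j * f j i + b - y i) ^ 2
        + ((1 - p) / (2 * (n : ℝ) * p)) * ∑ i, ∑ j, (W j * f j i) ^ 2 := by
  classical
  have hp0 : (0:ℝ) ≤ p := hp.le
  have hpne : p ≠ 0 := hp.ne'
  set a : ℝ := (1 - p) / p with ha_def
  have hane : a ≠ -1 := by
    have h0 : 0 ≤ a := div_nonneg (by linarith) hp0
    intro h; rw [h] at h0; linarith
  have key := fun (j : Fin m) (g : ℝ → ℝ) =>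
    two_point_aux μ p a (-1) hp0 hp1 hane (η j) (hmeas j) (hlaw1 j) (hlaw2 j) g
  -- first moment
  have hInt1 : ∀ j, Integrable (η j) μ := fun j => (key j id).1
  have hE1 : ∀ j, ∫ ω, η j ω ∂μ = 0 := by
    intro j
    have h := (key j id).2
    simp only [id] at h
    rw [h, ha_def]
    field_simp
    ring
  -- second moments
  have hInt2 : ∀ j k, Integrable (fun ω => η j ω * η k ω) μ := by
    intro j k
    by_cases hjk : j = k
    · subst hjk; exact (key j (fun x => x * x)).1
    · exact (hindep.indepFun hjk).integrable_mul (hInt1 j) (hInt1 k)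
  have hE2 : ∀ j k, (∫ ω, η j ω * η k ω ∂μ) = if j = k then (1 - p) / p else 0 := by
    intro j k
    by_cases hjk : j = k
    · subst hjk
      have h := (key j (fun x => x * x)).2
      rw [if_pos rfl]
      rw [h, ha_def]
      field_simp
      ring
    · have h := (hindep.indepFun hjk).integral_mul_eq_mul_integral (hInt1 j).1 (hInt1 k).1
      simp only [if_neg hjk]
      have h' : (∫ ω, η j ω * η k ω ∂μ) = (∫ ω, η j ω ∂μ) * ∫ ω, η k ω ∂μ := h
      rw [h', hE1 j, hE1 k, mul_zero]
  -- abbreviations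
  set x : Fin n → Fin m → ℝ := fun i j => W j * f j i with hx_def
  set C : Fin n → ℝ := fun i => (∑ j, x i j) + b - y i with hC_def
  -- pointwise expansion
  have hpt : ∀ ω, ∀ i : Fin n,
      ((∑ j, (1 + η j ω) * (W j * f j i)) + b - y i) ^ 2
        = C i ^ 2 + (∑ j, (2 * C i * x i j) * η j ω)
          + ∑ j, ∑ k, (x i j * x i k) * (η j ω * η k ω) := by
    intro ω i
    have h1 : (∑ j, (1 + η j ω) * (W j * f j i)) + b - y i
        = C i + ∑ j, x i j * η j ω := by
      simp only [hC_def, hx_def]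
      rw [Finset.sum_congr rfl (fun j _ => (by ring :
        (1 + η j ω) * (W j * f j i) = W j * f j i + (W j * f j i) * η j ω)),
        Finset.sum_add_distrib]
      ring
    rw [h1, add_sq]
    congr 1
    · congr 1
      rw [Finset.mul_sum]
      exact Finset.sum_congr rfl (fun j _ => by ring)
    · rw [sq, Finset.sum_mul_sum]
      exact Finset.sum_congr rfl fun j _ => Finset.sum_congr rfl fun k _ => by ring
  -- integrability of each summand
  have hIntRow : ∀ i : Fin n, Integrable (fun ω =>
      C i ^ 2 + (∑ j, (2 * C i * x i j) * η j ω)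
        + ∑ j, ∑ k, (x i j * x i k) * (η j ω * η k ω)) μ := by
    intro i
    refine ((integrable_const _).add (integrable_finset_sum _ fun j _ =>
      ((hInt1 j).const_mul _))).add (integrable_finset_sum _ fun j _ =>
      integrable_finset_sum _ fun k _ => ((hInt2 j k).const_mul _))
  -- compute
  rw [integral_const_mul]
  have hsum : (∫ ω, ∑ i, ((∑ j, (1 + η j ω) * (W j * f j i)) + b - y i) ^ 2 ∂μ)
      = ∑ i, ∫ ω, (C i ^ 2 + (∑ j, (2 * C i * x i j) * η j ω)
          + ∑ j, ∑ k, (x i j * x i k) * (η j ω * η k ω)) ∂μ := by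
    rw [← integral_finset_sum _ (fun i _ => hIntRow i)]
    exact integral_congr_ae (Filter.Eventually.of_forall fun ω =>
      Finset.sum_congr rfl fun i _ => hpt ω i)
  rw [hsum]
  have hrow : ∀ i : Fin n, (∫ ω, (C i ^ 2 + (∑ j, (2 * C i * x i j) * η j ω)
          + ∑ j, ∑ k, (x i j * x i k) * (η j ω * η k ω)) ∂μ)
      = C i ^ 2 + ((1 - p) / p) * ∑ j, x i j ^ 2 := by
    intro i
    have hIA : Integrable (fun ω => ∑ j, (2 * C i * x i j) * η j ω) μ :=
      integrable_finset_sum _ fun j _ => ((hInt1 j).const_mul _)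
    have hIB : Integrable (fun ω => ∑ j, ∑ k, (x i j * x i k) * (η j ω * η k ω)) μ :=
      integrable_finset_sum _ fun j _ =>
        integrable_finset_sum _ fun k _ => ((hInt2 j k).const_mul _)
    have hIC : Integrable (fun ω => C i ^ 2 + ∑ j, (2 * C i * x i j) * η j ω) μ :=
      (integrable_const _).add hIA
    rw [integral_add hIC hIB, integral_add (integrable_const _) hIA,
      integral_const,
      integral_finset_sum _ (fun j _ => ((hInt1 j).const_mul _)),
      integral_finset_sum _ (fun j _ => integrable_finset_sum _ fun k _ =>
        ((hInt2 j k).const_mul _))]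
    simp only [integral_const_mul, hE1, mul_zero, Finset.sum_const_zero]
    have hterm : ∀ j : Fin m, (∫ ω, ∑ k, (x i j * x i k) * (η j ω * η k ω) ∂μ)
        = (x i j * x i j) * ((1 - p) / p) := by
      intro j
      rw [integral_finset_sum _ (fun k _ => ((hInt2 j k).const_mul _)),
        Finset.sum_congr rfl (fun k (_ : k ∈ Finset.univ) =>
          integral_const_mul (x i j * x i k) (fun ω => η j ω * η k ω)),
        Finset.sum_congr rfl (fun k (_ : k ∈ Finset.univ) => by rw [hE2 j k])]
      simp [Finset.sum_ite_eq, mul_ite]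
    rw [Finset.sum_congr rfl (fun j (_ : j ∈ Finset.univ) => hterm j)]
    rw [Finset.mul_sum,
      Finset.sum_congr rfl (fun j (_ : j ∈ Finset.univ) =>
        (by ring : x i j * x i j * ((1 - p) / p) = (1 - p) / p * x i j ^ 2))]
    simp [measure_univ]
  rw [Finset.sum_congr rfl (fun i (_ : i ∈ Finset.univ) => hrow i),
    Finset.sum_add_distrib, mul_add]
  congr 1
  rw [← Finset.mul_sum, ← mul_assoc]
  have : 1 / (2 * (n:ℝ)) * ((1 - p) / p) = (1 - p) / (2 * (n:ℝ) * p) := by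
    rw [div_mul_div_comm, one_mul]
  rw [this]
end

section
/- Let θ_{t+1} = θ_t − ε ∇R(θ_t) be one gradient descent step for a twice continuously differentiable loss R. Then the continuous flow dθ/dt = −∇R̃(θ) with modified loss R̃(θ) = R(θ) + (ε/4)‖∇R(θ)‖² satisfies θ(ε) = θ_{t+1} + O(ε³) when started at θ(0) = θ_t. -/
noncomputable section

open InnerProductSpace Metric Set

section Aux

variable {M : ℕ}
local notation "E" => EuclideanSpace ℝ (Fin M)

lemma aux_contDiff_gradient {R : E → ℝ} {n : ℕ} (hR : ContDiff ℝ ((n : ℕ∞) + 1) R) :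
    ContDiff ℝ n (gradient R) :=
  (toDual ℝ E).symm.contDiff.comp (hR.fderiv_right le_rfl)

lemma aux_inner_fderiv_gradient {R : E → ℝ} (hR : ContDiff ℝ 3 R) (x v w : E) :
    (inner ℝ ((fderiv ℝ (gradient R) x) v) w : ℝ)
      = (fderiv ℝ (fderiv ℝ R) x v) w := by
  have hfd : ContDiff ℝ 2 (fderiv ℝ R) := hR.fderiv_right (by norm_num)
  have hgd : DifferentiableAt ℝ (gradient R) x := by
    have : ContDiff ℝ 2 (gradient R) := (toDual ℝ E).symm.contDiff.comp hfd
    exact (this.differentiable (by norm_num)) x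
  have hfun : (fun y => (inner ℝ w (gradient R y) : ℝ)) = fun y => fderiv ℝ R y w := by
    funext y
    rw [real_inner_comm]
    exact toDual_symm_apply
  have h1 : HasFDerivAt (fun y => (inner ℝ w (gradient R y) : ℝ))
      ((innerSL ℝ w).comp (fderiv ℝ (gradient R) x)) x :=
    (innerSL ℝ w).hasFDerivAt.comp x hgd.hasFDerivAt
  have h2 : HasFDerivAt (fun y => fderiv ℝ R y w)
      ((ContinuousLinearMap.apply ℝ ℝ w).comp (fderiv ℝ (fderiv ℝ R) x)) x :=
    (ContinuousLinearMap.apply ℝ ℝ w).hasFDerivAt.comp x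
      ((hfd.differentiable (by norm_num)) x).hasFDerivAt
  rw [hfun] at h1
  have happ := DFunLike.congr_fun (h1.unique h2) v
  rw [real_inner_comm]; simpa using happ

lemma aux_inner_symm {R : E → ℝ} (hR : ContDiff ℝ 3 R) (x v w : E) :
    (inner ℝ ((fderiv ℝ (gradient R) x) v) w : ℝ)
      = inner ℝ ((fderiv ℝ (gradient R) x) w) v := by
  rw [aux_inner_fderiv_gradient hR x v w, aux_inner_fderiv_gradient hR x w v]
  have hf : ∀ y, HasFDerivAt R (fderiv ℝ R y) y := fun y =>
    ((hR.differentiable (by norm_num)) y).hasFDerivAt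
  have hfd2 : ContDiff ℝ 2 (fderiv ℝ R) := hR.fderiv_right (by norm_num)
  have hfd2' : Differentiable ℝ (fderiv ℝ R) := hfd2.differentiable (by norm_num)
  have hx : HasFDerivAt (fderiv ℝ R) (fderiv ℝ (fderiv ℝ R) x) x :=
    (hfd2' x).hasFDerivAt
  exact second_derivative_symmetric hf hx v w

/-- gradient of `‖gradient R‖²` -/
lemma aux_gradient_norm_sq {R : E → ℝ} (hR : ContDiff ℝ 3 R) (x : E) :
    gradient (fun y => ‖gradient R y‖ ^ 2) x
      = (2 : ℝ) • (fderiv ℝ (gradient R) x) (gradient R x) := by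
  have hfd : ContDiff ℝ 2 (fderiv ℝ R) := hR.fderiv_right (by norm_num)
  have hgd : DifferentiableAt ℝ (gradient R) x := by
    have : ContDiff ℝ 2 (gradient R) := (toDual ℝ E).symm.contDiff.comp hfd
    exact (this.differentiable (by norm_num)) x
  have h1 : HasFDerivAt (fun y => ‖gradient R y‖ ^ 2)
      (2 • (innerSL ℝ (gradient R x)).comp (fderiv ℝ (gradient R) x)) x :=
    hgd.hasFDerivAt.norm_sq
  refine ext_inner_right ℝ fun v => ?_
  have hPv : (inner ℝ (gradient (fun y => ‖gradient R y‖ ^ 2) x) v : ℝ)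
      = (2 • (innerSL ℝ (gradient R x)).comp (fderiv ℝ (gradient R) x)) v := by
    show (inner ℝ ((toDual ℝ E).symm
      (fderiv ℝ (fun y => ‖gradient R y‖ ^ 2) x)) v : ℝ) = _
    rw [h1.fderiv]
    exact toDual_symm_apply
  rw [hPv]
  have : (inner ℝ ((2 : ℝ) • (fderiv ℝ (gradient R) x) (gradient R x)) v : ℝ)
      = 2 * inner ℝ ((fderiv ℝ (gradient R) x) (gradient R x)) v := by
    rw [real_inner_smul_left]
  rw [this, aux_inner_symm hR x (gradient R x) v]
  simp [real_inner_comm]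

end Aux

set_option maxHeartbeats 2000000 in
/-- one gradient descent step θ_{t+1} = θ_t − ε∇R(θ_t) is approximated to
O(ε³) by the time-ε flow of the modified loss R̃(θ) = R(θ) + (ε/4)‖∇R(θ)‖². -/
theorem modified_gradient_flow_matches_GD_step
    (M : ℕ) (R : EuclideanSpace ℝ (Fin M) → ℝ) (hR : ContDiff ℝ 3 R)
    (θt : EuclideanSpace ℝ (Fin M)) :
    ∃ C > (0 : ℝ), ∃ ε₀ > (0 : ℝ), ∀ ε : ℝ, ε ∈ Set.Ioo 0 ε₀ →
      ∀ θ : ℝ → EuclideanSpace ℝ (Fin M), θ 0 = θt →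
        (∀ t ∈ Set.Icc (0 : ℝ) ε, HasDerivAt θ
            (-(gradient (fun ϑ => R ϑ + (ε / 4) * ‖gradient R ϑ‖ ^ 2) (θ t))) t) →
        ‖θ ε - (θt - ε • gradient R θt)‖ ≤ C * ε ^ 3 := by
  set g : EuclideanSpace ℝ (Fin M) → EuclideanSpace ℝ (Fin M) := gradient R with hg_def
  have hg : ContDiff ℝ 2 g := aux_contDiff_gradient (n := 2) (hR.of_le (by norm_num))
  have hgd : Differentiable ℝ g := hg.differentiable (by norm_num)
  set N : EuclideanSpace ℝ (Fin M) → ℝ := fun x => ‖g x‖ ^ 2 with hN_def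
  have hN : ContDiff ℝ 2 N := hg.norm_sq (𝕜 := ℝ)
  have hNd : Differentiable ℝ N := hN.differentiable (by norm_num)
  have hRd : Differentiable ℝ R := hR.differentiable (by norm_num)
  set P : EuclideanSpace ℝ (Fin M) → EuclideanSpace ℝ (Fin M) := gradient N with hP_def
  have hP : ContDiff ℝ 1 P := aux_contDiff_gradient (n := 1) (hN.of_le (by norm_num))
  have hPd : Differentiable ℝ P := hP.differentiable (by norm_num)
  set H : EuclideanSpace ℝ (Fin M) → (EuclideanSpace ℝ (Fin M) →L[ℝ] EuclideanSpace ℝ (Fin M)) := fun x => fderiv ℝ g x with hH_def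
  have hH : ContDiff ℝ 1 H := hg.fderiv_right (by norm_num)
  have hHd : Differentiable ℝ H := hH.differentiable (by norm_num)
  -- the ball
  set B : Set (EuclideanSpace ℝ (Fin M)) := closedBall θt 1 with hB_def
  have hBcpt : IsCompact B := isCompact_closedBall θt 1
  have hBconv : Convex ℝ B := convex_closedBall θt 1
  have hθtB : θt ∈ B := mem_closedBall_self (by norm_num)
  -- constants
  obtain ⟨a₀, ha₀⟩ := hBcpt.exists_bound_of_continuousOn hg.continuous.continuousOn
  obtain ⟨b₀, hb₀⟩ := hBcpt.exists_bound_of_continuousOn hP.continuous.continuousOn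
  obtain ⟨L₀, hL₀⟩ := hBcpt.exists_bound_of_continuousOn hH.continuous.continuousOn
  have hH0 : ContDiff ℝ 0 (fderiv ℝ H) := hH.fderiv_right (by norm_num)
  have hP0 : ContDiff ℝ 0 (fderiv ℝ P) := hP.fderiv_right (by norm_num)
  obtain ⟨D₀, hD₀⟩ := hBcpt.exists_bound_of_continuousOn (f := fderiv ℝ H) hH0.continuous.continuousOn
  obtain ⟨Q₀, hQ₀⟩ := hBcpt.exists_bound_of_continuousOn (f := fderiv ℝ P) hP0.continuous.continuousOn
  set a := max a₀ 0 with ha_def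
  set b := max b₀ 0 with hb_def
  set L := max L₀ 0 with hL_def
  set D := max D₀ 0 with hD_def
  set Q := max Q₀ 0 with hQ_def
  have ha : ∀ x ∈ B, ‖g x‖ ≤ a := fun x hx => (ha₀ x hx).trans (le_max_left _ _)
  have hb : ∀ x ∈ B, ‖P x‖ ≤ b := fun x hx => (hb₀ x hx).trans (le_max_left _ _)
  have hL : ∀ x ∈ B, ‖H x‖ ≤ L := fun x hx => (hL₀ x hx).trans (le_max_left _ _)
  have hD : ∀ x ∈ B, ‖fderiv ℝ H x‖ ≤ D := fun x hx => (hD₀ x hx).trans (le_max_left _ _)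
  have hQ : ∀ x ∈ B, ‖fderiv ℝ P x‖ ≤ Q := fun x hx => (hQ₀ x hx).trans (le_max_left _ _)
  have ha0 : 0 ≤ a := le_max_right _ _
  have hb0 : 0 ≤ b := le_max_right _ _
  have hL0 : 0 ≤ L := le_max_right _ _
  have hD0 : 0 ≤ D := le_max_right _ _
  have hQ0 : 0 ≤ Q := le_max_right _ _
  -- Lipschitz estimates on B
  have hgLip : ∀ x ∈ B, ∀ y ∈ B, ‖g y - g x‖ ≤ L * ‖y - x‖ := fun x hx y hy =>
    hBconv.norm_image_sub_le_of_norm_fderiv_le (fun z _ => hgd z) hL hx hy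
  have hPLip : ∀ x ∈ B, ∀ y ∈ B, ‖P y - P x‖ ≤ Q * ‖y - x‖ := fun x hx y hy =>
    hBconv.norm_image_sub_le_of_norm_fderiv_le (fun z _ => hPd z) hQ hx hy
  have hHLip : ∀ x ∈ B, ∀ y ∈ B, ‖H y - H x‖ ≤ D * ‖y - x‖ := fun x hx y hy =>
    hBconv.norm_image_sub_le_of_norm_fderiv_le (fun z _ => hHd z) hD hx hy
  -- second-order Taylor bound for g at θt
  have hTay : ∀ y ∈ B, ‖g y - g θt - (H θt) (y - θt)‖ ≤ D * ‖y - θt‖ ^ 2 := by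
    intro y hy
    set r := ‖y - θt‖ with hr_def
    have hr0 : 0 ≤ r := norm_nonneg _
    have hr1 : r ≤ 1 := by
      rw [hr_def, ← dist_eq_norm]; exact hy
    have hsub : closedBall θt r ⊆ B := closedBall_subset_closedBall hr1
    set φ : EuclideanSpace ℝ (Fin M) → EuclideanSpace ℝ (Fin M) := fun z => g z - (H θt) z with hφ_def
    have hφd : ∀ z, DifferentiableAt ℝ φ z := fun z =>
      (hgd z).sub ((H θt).differentiableAt)
    have hφ' : ∀ z ∈ closedBall θt r, ‖fderiv ℝ φ z‖ ≤ D * r := by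
      intro z hz
      have : fderiv ℝ φ z = H z - H θt :=
        ((hgd z).hasFDerivAt.sub (H θt).hasFDerivAt).fderiv
      rw [this]
      calc ‖H z - H θt‖ ≤ D * ‖z - θt‖ := hHLip θt hθtB z (hsub hz)
        _ ≤ D * r := by
            have : ‖z - θt‖ ≤ r := by rw [← dist_eq_norm]; exact hz
            exact mul_le_mul_of_nonneg_left this hD0
    have := (convex_closedBall θt r).norm_image_sub_le_of_norm_fderiv_le
      (fun z _ => hφd z) hφ' (mem_closedBall_self hr0)
      (by rw [mem_closedBall, dist_eq_norm]; try exact le_rfl)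
    have hid : φ y - φ θt = g y - g θt - (H θt) (y - θt) := by
      simp only [hφ_def, map_sub]
      try abel
    rw [hid] at this
    calc ‖g y - g θt - (H θt) (y - θt)‖ ≤ D * r * ‖y - θt‖ := this
      _ = D * ‖y - θt‖ ^ 2 := by rw [hr_def]; ring
  -- the key second-derivative identity
  set w : EuclideanSpace ℝ (Fin M) := (H θt) (g θt) with hw_def
  have hPθt : P θt = (2 : ℝ) • w := aux_gradient_norm_sq hR θt
  -- global constants
  set V := a + b with hV_def
  have hV0 : 0 ≤ V := add_nonneg ha0 hb0
  set c₁ := L * V + b / 4 with hc₁_def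
  have hc₁0 : 0 ≤ c₁ := by positivity
  set C₂ := L * c₁ + D * V ^ 2 + Q * V / 4 with hC₂_def
  have hC₂0 : 0 ≤ C₂ := by positivity
  clear_value a b L D Q V c₁ C₂
  refine ⟨C₂ + 1, by positivity, min 1 (1 / (2 * V + 2)), by positivity, ?_⟩
  rintro ε ⟨hε0, hεlt⟩ θ hθ0 hθ'
  have hε1 : ε ≤ 1 := le_of_lt (lt_of_lt_of_le hεlt (min_le_left _ _))
  have hεV : V * ε < 1 / 2 := by
    have h2 : ε < 1 / (2 * V + 2) := lt_of_lt_of_le hεlt (min_le_right _ _)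
    have h3 : 0 < 2 * V + 2 := by linarith
    rw [lt_div_iff₀ h3] at h2
    nlinarith [mul_pos hε0 (lt_of_le_of_lt (le_refl (0:ℝ)) (by linarith : (0:ℝ) < 1))]
  -- gradient of modified loss
  have hGε : ∀ x : EuclideanSpace ℝ (Fin M), gradient (fun ϑ => R ϑ + ε / 4 * ‖g ϑ‖ ^ 2) x
      = g x + (ε / 4) • P x := by
    intro x
    have h1 : fderiv ℝ (fun ϑ => R ϑ + (ε / 4) * N ϑ) x
        = fderiv ℝ R x + (ε / 4) • fderiv ℝ N x :=
      ((hRd x).hasFDerivAt.add (((hNd x).hasFDerivAt).const_mul (ε / 4))).fderiv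
    show (toDual ℝ (EuclideanSpace ℝ (Fin M))).symm (fderiv ℝ (fun ϑ => R ϑ + (ε / 4) * N ϑ) x) = _
    rw [h1, map_add, map_smulₛₗ]
    norm_num
    rfl
  -- bound for the vector field on B
  have hGbound : ∀ x ∈ B, ‖g x + (ε / 4) • P x‖ ≤ V := by
    intro x hx
    calc ‖g x + (ε / 4) • P x‖ ≤ ‖g x‖ + ‖(ε / 4) • P x‖ := norm_add_le _ _
      _ ≤ a + (ε / 4) * b := by
          refine add_le_add (ha x hx) ?_
          rw [norm_smul, Real.norm_eq_abs, abs_of_nonneg (by linarith)]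
          exact mul_le_mul_of_nonneg_left (hb x hx) (by linarith)
      _ ≤ a + b := by nlinarith
      _ = V := hV_def.symm
  -- the solution stays in the small ball of radius 1/2
  have hθc : ContinuousOn θ (Icc 0 ε) := fun t ht =>
    (hθ' t ht).continuousAt.continuousWithinAt
  have inball : ∀ t ∈ Icc (0 : ℝ) ε, ‖θ t - θt‖ ≤ 1 / 2 := by
    by_contra hcon
    push_neg at hcon
    set S : Set ℝ := {t ∈ Icc (0 : ℝ) ε | 1 / 2 ≤ ‖θ t - θt‖} with hS_def
    have hSne : S.Nonempty := by
      obtain ⟨t, ht, h⟩ := hcon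
      exact ⟨t, ht, le_of_lt h⟩
    have hScl : IsClosed S := by
      have : ContinuousOn (fun t => ‖θ t - θt‖) (Icc 0 ε) :=
        (hθc.sub continuousOn_const).norm
      exact ContinuousOn.preimage_isClosed_of_isClosed this isClosed_Icc
        (isClosed_Ici (a := (1 : ℝ) / 2))
    have hSbdd : BddBelow S := ⟨0, fun t ht => ht.1.1⟩
    set t₀ := sInf S with ht₀_def
    have ht₀S : t₀ ∈ S := hScl.csInf_mem hSne hSbdd
    have ht₀Icc : t₀ ∈ Icc (0 : ℝ) ε := ht₀S.1
    have hbefore : ∀ s ∈ Ico (0 : ℝ) t₀, θ s ∈ B := by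
      intro s hs
      have hsIcc : s ∈ Icc (0 : ℝ) ε := ⟨hs.1, le_trans (le_of_lt hs.2) ht₀Icc.2⟩
      have hsnotS : s ∉ S := fun hmem => absurd (csInf_le hSbdd hmem) (not_le.2 hs.2)
      have : ‖θ s - θt‖ < 1 / 2 := by
        by_contra h
        exact hsnotS ⟨hsIcc, le_of_not_gt h⟩
      rw [hB_def, mem_closedBall, dist_eq_norm]
      linarith
    have hmvi := norm_image_sub_le_of_norm_deriv_le_segment'
      (f := θ) (f' := fun t => -(gradient (fun ϑ => R ϑ + ε / 4 * ‖g ϑ‖ ^ 2) (θ t)))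
      (a := 0) (b := t₀) (C := V)
      (fun s hs => (hθ' s ⟨hs.1, le_trans hs.2 ht₀Icc.2⟩).hasDerivWithinAt.mono
        (Icc_subset_Icc le_rfl ht₀Icc.2) |>.mono (by exact subset_rfl))
      (fun s hs => by
        rw [norm_neg, hGε (θ s)]
        exact hGbound (θ s) (hbefore s hs))
      t₀ ⟨ht₀Icc.1, le_refl t₀⟩
    rw [hθ0, sub_zero] at hmvi
    have : ‖θ t₀ - θt‖ ≤ V * ε := le_trans hmvi
      (mul_le_mul_of_nonneg_left ht₀Icc.2 hV0)
    have h12 : (1 : ℝ) / 2 ≤ ‖θ t₀ - θt‖ := ht₀S.2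
    have := lt_of_le_of_lt (le_trans h12 this) hεV
    exact lt_irrefl _ this
  have inB : ∀ t ∈ Icc (0 : ℝ) ε, θ t ∈ B := by
    intro t ht
    rw [hB_def, mem_closedBall, dist_eq_norm]
    linarith [inball t ht]
  -- speed bound
  have hspeed : ∀ t ∈ Icc (0 : ℝ) ε, ‖θ t - θt‖ ≤ V * t := by
    have hmvi := norm_image_sub_le_of_norm_deriv_le_segment'
      (f := θ) (f' := fun t => -(gradient (fun ϑ => R ϑ + ε / 4 * ‖g ϑ‖ ^ 2) (θ t)))
      (a := 0) (b := ε) (C := V)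
      (fun s hs => (hθ' s hs).hasDerivWithinAt)
      (fun s hs => by
        rw [norm_neg, hGε (θ s)]
        exact hGbound (θ s) (inB s (Ico_subset_Icc_self hs)))
    intro t ht
    have := hmvi t ht
    rwa [hθ0, sub_zero] at this
  -- first-order estimate
  have hfirst : ∀ t ∈ Icc (0 : ℝ) ε, ‖θ t - θt + t • g θt‖ ≤ c₁ * ε * t := by
    have hmvi := norm_image_sub_le_of_norm_deriv_le_segment'
      (f := fun s => θ s + s • g θt)
      (f' := fun t => -(gradient (fun ϑ => R ϑ + ε / 4 * ‖g ϑ‖ ^ 2) (θ t)) + g θt)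
      (a := 0) (b := ε) (C := c₁ * ε)
      (fun s hs => by
        have h : HasDerivAt (fun s => θ s + s • g θt)
            (-(gradient (fun ϑ => R ϑ + ε / 4 * ‖g ϑ‖ ^ 2) (θ s)) + g θt) s := by
          have h0 := (hθ' s hs).add ((hasDerivAt_id s).smul_const (g θt))
          simp only [one_smul] at h0
          exact h0
        exact h.hasDerivWithinAt)
      (fun s hs => by
        show ‖-gradient (fun ϑ => R ϑ + ε / 4 * ‖g ϑ‖ ^ 2) (θ s) + g θt‖ ≤ c₁ * ε
        have hsIcc : s ∈ Icc (0 : ℝ) ε := Ico_subset_Icc_self hs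
        rw [hGε (θ s)]
        have hident : -(g (θ s) + (ε / 4) • P (θ s)) + g θt
            = (g θt - g (θ s)) - (ε / 4) • P (θ s) := by abel
        rw [hident]
        calc ‖(g θt - g (θ s)) - (ε / 4) • P (θ s)‖
            ≤ ‖g θt - g (θ s)‖ + ‖(ε / 4) • P (θ s)‖ := norm_sub_le _ _
          _ ≤ L * ‖θt - θ s‖ + (ε / 4) * b := by
              refine add_le_add (hgLip (θ s) (inB s hsIcc) θt hθtB) ?_
              rw [norm_smul, Real.norm_eq_abs, abs_of_nonneg (by linarith)]
              exact mul_le_mul_of_nonneg_left (hb (θ s) (inB s hsIcc)) (by linarith)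
          _ ≤ L * (V * s) + (ε / 4) * b := by
              refine add_le_add_left (mul_le_mul_of_nonneg_left ?_ hL0) _
              rw [norm_sub_rev]
              exact hspeed s hsIcc
          _ ≤ c₁ * ε := by
              rw [hc₁_def]
              have hs2 : s ≤ ε := le_of_lt hs.2
              nlinarith [mul_le_mul_of_nonneg_left hs2 (mul_nonneg hL0 hV0)])
    intro t ht
    have h5 : ‖θ t + t • g θt - (θ 0 + (0 : ℝ) • g θt)‖ ≤ c₁ * ε * (t - 0) := hmvi t ht
    rw [hθ0] at h5
    have hid : θ t + t • g θt - (θt + (0 : ℝ) • g θt) = θ t - θt + t • g θt := by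
      rw [zero_smul, add_zero]
      abel
    rw [hid] at h5
    calc ‖θ t - θt + t • g θt‖ ≤ c₁ * ε * (t - 0) := h5
      _ = c₁ * ε * t := by ring
  -- main estimate with the corrector
  have hmain := norm_image_sub_le_of_norm_deriv_le_segment'
    (f := fun s => θ s + s • g θt - ((s ^ 2 - ε * s) / 2) • w)
    (f' := fun t => -(gradient (fun ϑ => R ϑ + ε / 4 * ‖g ϑ‖ ^ 2) (θ t))
        + g θt - (t - ε / 2) • w)
    (a := 0) (b := ε) (C := C₂ * ε ^ 2)
    (fun t ht => by
      have hu : HasDerivAt (fun s : ℝ => (s ^ 2 - ε * s) / 2) (t - ε / 2) t := by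
        have h1 := ((hasDerivAt_pow 2 t).sub ((hasDerivAt_id t).const_mul ε)).div_const 2
        have h2 : (((2 : ℕ) : ℝ) * t ^ (2 - 1) - ε * 1) / 2 = t - ε / 2 := by
          push_cast
          ring
        rwa [h2] at h1
      have h : HasDerivAt (fun s => θ s + s • g θt - ((s ^ 2 - ε * s) / 2) • w)
          (-(gradient (fun ϑ => R ϑ + ε / 4 * ‖g ϑ‖ ^ 2) (θ t))
            + g θt - (t - ε / 2) • w) t := by
        have h0 :=
          (((hθ' t ht).add ((hasDerivAt_id t).smul_const (g θt))).sub (hu.smul_const w))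
        simp only [one_smul] at h0
        exact h0
      exact h.hasDerivWithinAt)
    (fun t ht => by
      show ‖-gradient (fun ϑ => R ϑ + ε / 4 * ‖g ϑ‖ ^ 2) (θ t)
          + g θt - (t - ε / 2) • w‖ ≤ C₂ * ε ^ 2
      have htIcc : t ∈ Icc (0 : ℝ) ε := Ico_subset_Icc_self ht
      have hyB : θ t ∈ B := inB t htIcc
      set y := θ t with hy_def
      set e₁ := g y - g θt - (H θt) (y - θt) with he₁_def
      set e₂ := y - θt + t • g θt with he₂_def
      set e₃ := P y - P θt with he₃_def
      have hident : -gradient (fun ϑ => R ϑ + ε / 4 * ‖g ϑ‖ ^ 2) y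
          + g θt - (t - ε / 2) • w = -((H θt) e₂ + e₁ + (ε / 4) • e₃) := by
        rw [hGε y]
        have h2 : g y = g θt + (H θt) (y - θt) + e₁ := by rw [he₁_def]; abel
        have h3 : P y = P θt + e₃ := by rw [he₃_def]; abel
        have h4 : (H θt) (y - θt) = (H θt) e₂ - t • w := by
          have : (H θt) e₂ = (H θt) (y - θt) + t • (H θt) (g θt) := by
            rw [he₂_def, map_add, map_smul]
          rw [this, hw_def]
          abel
        rw [h2, h3, h4, hPθt]
        module
      rw [hident, norm_neg]
      have hb₁ : ‖e₁‖ ≤ D * (V * t) ^ 2 := by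
        refine le_trans (hTay y hyB) ?_
        have := hspeed t htIcc
        have h1 : ‖y - θt‖ ^ 2 ≤ (V * t) ^ 2 := by
          apply sq_le_sq'
          · nlinarith [norm_nonneg (y - θt)]
          · exact this
        exact mul_le_mul_of_nonneg_left h1 hD0
      have hb₂ : ‖(H θt) e₂‖ ≤ L * (c₁ * ε * t) := by
        calc ‖(H θt) e₂‖ ≤ ‖H θt‖ * ‖e₂‖ := (H θt).le_opNorm e₂
          _ ≤ L * (c₁ * ε * t) := by
              refine mul_le_mul (hL θt hθtB) (hfirst t htIcc) (norm_nonneg _) hL0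
      have hb₃ : ‖(ε / 4) • e₃‖ ≤ (ε / 4) * (Q * (V * t)) := by
        rw [norm_smul, Real.norm_eq_abs, abs_of_nonneg (by linarith)]
        refine mul_le_mul_of_nonneg_left ?_ (by linarith)
        calc ‖e₃‖ ≤ Q * ‖y - θt‖ := hPLip θt hθtB y hyB
          _ ≤ Q * (V * t) := mul_le_mul_of_nonneg_left (hspeed t htIcc) hQ0
      calc ‖(H θt) e₂ + e₁ + (ε / 4) • e₃‖
          ≤ ‖(H θt) e₂‖ + ‖e₁‖ + ‖(ε / 4) • e₃‖ := norm_add₃_le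
        _ ≤ L * (c₁ * ε * t) + D * (V * t) ^ 2 + (ε / 4) * (Q * (V * t)) := by
            exact add_le_add (add_le_add hb₂ hb₁) hb₃
        _ ≤ C₂ * ε ^ 2 := by
            rw [hC₂_def]
            have ht0 : 0 ≤ t := ht.1
            have htε : t ≤ ε := le_of_lt ht.2
            nlinarith [mul_le_mul htε htε ht0 hε0.le, mul_le_mul_of_nonneg_left htε hε0.le,
              mul_nonneg hL0 hc₁0, mul_nonneg hD0 (mul_nonneg hV0 hV0), mul_nonneg hQ0 hV0,
              ht0, hε0.le])
    ε ⟨le_of_lt hε0, le_refl ε⟩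
  -- conclude
  have hmain' : ‖θ ε + ε • g θt - ((ε ^ 2 - ε * ε) / 2) • w
      - (θ 0 + (0 : ℝ) • g θt - (((0 : ℝ) ^ 2 - ε * 0) / 2) • w)‖
      ≤ C₂ * ε ^ 2 * (ε - 0) := hmain
  rw [hθ0] at hmain'
  have hΦε : θ ε + ε • g θt - ((ε ^ 2 - ε * ε) / 2) • w
      - (θt + (0 : ℝ) • g θt - (((0 : ℝ) ^ 2 - ε * 0) / 2) • w)
      = θ ε - (θt - ε • g θt) := by
    have h0 : (ε ^ 2 - ε * ε) / 2 = 0 := by ring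
    have h1 : (((0 : ℝ) ^ 2 - ε * 0) / 2) = 0 := by ring
    rw [h0, h1, zero_smul, zero_smul]
    abel
  rw [hΦε] at hmain'
  calc ‖θ ε - (θt - ε • g θt)‖ ≤ C₂ * ε ^ 2 * (ε - 0) := hmain'
    _ = C₂ * ε ^ 3 := by ring
    _ ≤ (C₂ + 1) * ε ^ 3 := by nlinarith
end
end
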